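/- Let G be a finite almost simple group and let A be a nontrivial finite abelian group. Then for the wreath product A ≀ G constructed via the regular action of G, d(A ≀ G) ≥ d(A) + 1. -/

import Mathlib

universe u

/-- `d G`: the minimal size of a generating set of the group `G`. -/
noncomputable def dGen (G : Type u) [Group G] : ℕ :=
  sInf {n | ∃ s : Finset G, s.card = n ∧ Subgroup.closure (s : Set G) = ⊤}

/-- `d_p A`: the minimal size of a generating set of a Sylow `p`-subgroup of `A`. -/
noncomputable def dP (p : ℕ) (A : Type u) [Group A] : ℕ :=
  dGen ↥((Nonempty.some (inferInstance : Nonempty (Sylow p A)) : Sylow p A) : Subgroup A)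

/-- `S` is a nonabelian simple normal subgroup of `G` with trivial centralizer,
i.e. `G` is almost simple with socle `S`. -/
def IsAlmostSimpleSocle {G : Type u} [Group G] (S : Subgroup G) : Prop :=
  S.Normal ∧ IsSimpleGroup S ∧ (¬ ∀ a b : S, a * b = b * a) ∧
    Subgroup.centralizer (S : Set G) = ⊥

/-- `G` is an almost simple group. -/
def IsAlmostSimple (G : Type u) [Group G] : Prop :=
  ∃ S : Subgroup G, IsAlmostSimpleSocle S

/-- The action of `H` on the base group `Y → G` of a wreath product, permuting the
coordinates:  `((g_y))^h = (g_{y h⁻¹})`, where the (right) action of `H` on `Y` is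
encoded by the permutation representation `act` (so that `y^h = (act h)⁻¹ y`). -/
def wreathAut (G : Type u) {H Y : Type u} [Group G] [Group H]
    (act : H →* Equiv.Perm Y) : H →* MulAut (Y → G) where
  toFun h :=
    { toFun := fun f y => f ((act h)⁻¹ y)
      invFun := fun f y => f (act h y)
      left_inv := fun f => funext fun y => by simp
      right_inv := fun f => funext fun y => by simp
      map_mul' := fun f g => rfl }
  map_one' := by ext f y; simp
  map_mul' h₁ h₂ := by ext f y; simp [mul_inv_rev]

@[simp] lemma wreathAut_apply {G H Y : Type u} [Group G] [Group H]
    (act : H →* Equiv.Perm Y) (h : H) (f : Y → G) (y : Y) :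
    wreathAut G act h f y = f ((act h)⁻¹ y) := rfl

/-- The (permutational) wreath product `G ≀_Y H`: the semidirect product
`(∏_{y ∈ Y} G) ⋊ H` where `H` permutes the coordinates via its action on `Y`
(encoded by the permutation representation `act`). -/
abbrev Wreath (G : Type u) {H Y : Type u} [Group G] [Group H]
    (act : H →* Equiv.Perm Y) : Type u :=
  (Y → G) ⋊[wreathAut G act] H

instance semidirectFinite {N H : Type u} [Group N] [Group H] (φ : H →* MulAut N)
    [Finite N] [Finite H] : Finite (N ⋊[φ] H) :=
  Finite.of_injective (fun w : N ⋊[φ] H => (w.left, w.right)) fun a b hab => by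
    cases a; cases b
    simp_all [Prod.ext_iff]

/-- The natural imprimitive action of the wreath product `G ≀_Y H` on `G × Y`,
where the first coordinate carries the regular action of `G`:
`(x, y)^{(g_y)·h} = (x · g_y, y^h)` (encoded as a permutation representation,
i.e. via the corresponding left action `w • p = p^{w⁻¹}`). -/
def imprimPerm (G : Type u) {H Y : Type u} [Group G] [Group H]
    (act : H →* Equiv.Perm Y) :
    Wreath G act →* Equiv.Perm (G × Y) where
  toFun w :=
    { toFun := fun p => (p.1 * (w.left (act w.right p.2))⁻¹, act w.right p.2)
      invFun := fun p => (p.1 * w.left p.2, (act w.right)⁻¹ p.2)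
      left_inv := fun p => by simp
      right_inv := fun p => by simp }
  map_one' := by ext p <;> simp
  map_mul' w₁ w₂ := by
    ext p <;>
      simp [SemidirectProduct.mul_left, SemidirectProduct.mul_right, mul_inv_rev, mul_assoc]

/-- The right regular permutation representation of a group `H` on itself,
`y^h = y * h` (encoded as a homomorphism to `Equiv.Perm H`, `h ↦ (y ↦ y * h⁻¹)`). -/
def rightRegularPerm (H : Type u) [Group H] : H →* Equiv.Perm H where
  toFun h := Equiv.mulRight h⁻¹
  map_one' := by ext y; simp
  map_mul' h₁ h₂ := by ext y; simp [mul_inv_rev, mul_assoc]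

/-- The regular wreath product `G ≀ H`, constructed from the regular action of `H`
on itself. -/
abbrev RegularWreath (G H : Type u) [Group G] [Group H] : Type u :=
  Wreath G (rightRegularPerm H)

/-- Data of a finite permutation group: a finite group `W`, a finite set `Y` and a
permutation representation of `W` on `Y`. -/
structure IterData : Type (u + 1) where
  W : Type u
  Y : Type u
  [grp : Group W]
  [finW : Finite W]
  [finY : Finite Y]
  act : W →* Equiv.Perm Y

attribute [instance] IterData.grp IterData.finW IterData.finY

/-- The iterated regular wreath product: `(iterData G n).W` is
`W_{n+1} = G_n ≀ (G_{n-1} ≀ ⋯ ≀ G_0)`, acting on `(iterData G n).Y = G_n × ⋯ × G_0`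
via the natural imprimitive action `(x, y)^{(g_y)·h} = (x^{g_y}, y^h)`; the base
case is `W_1 = G_0` with its right regular action on `X_1 = G_0`. -/
def iterData (G : ℕ → Type u) [∀ n, Group (G n)] [∀ n, Finite (G n)] : ℕ → IterData
  | 0 =>
    { W := G 0
      Y := G 0
      act := rightRegularPerm (G 0) }
  | (n + 1) =>
    let D := iterData G n
    { W := Wreath (G (n + 1)) D.act
      Y := (G (n + 1)) × D.Y
      act := imprimPerm (G (n + 1)) D.act }


section Aux
open Subgroup

lemma dGen_le_card {G : Type*} [Group G] {s : Finset G}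
    (hs : Subgroup.closure (s : Set G) = ⊤) : dGen G ≤ s.card :=
  Nat.sInf_le ⟨s, rfl, hs⟩

lemma exists_dGen_finset (G : Type*) [Group G] [Finite G] :
    ∃ s : Finset G, s.card = dGen G ∧ Subgroup.closure (s : Set G) = ⊤ := by
  have : ∃ n, n ∈ {n | ∃ s : Finset G, s.card = n ∧ Subgroup.closure (s : Set G) = ⊤} := by
    classical
    haveI := Fintype.ofFinite G
    exact ⟨_, ⟨Finset.univ, rfl, by simp⟩⟩
  obtain ⟨s, hcard, hgen⟩ := Nat.sInf_mem this
  exact ⟨s, hcard, hgen⟩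

lemma dGen_le_of_surjective {G H : Type*} [Group G] [Group H] [Finite G]
    (f : G →* H) (hf : Function.Surjective f) : dGen H ≤ dGen G := by
  classical
  obtain ⟨s, hcard, hgen⟩ := exists_dGen_finset G
  have hgen' : Subgroup.closure ((s.image f : Finset H) : Set H) = ⊤ := by
    rw [Finset.coe_image, ← MonoidHom.map_closure, hgen, Subgroup.map_top_of_surjective f hf]
  exact (dGen_le_card hgen').trans (by rw [← hcard]; exact Finset.card_image_le)

lemma card_le_pow_of_closure {C : Type*} [CommGroup C] [Finite C] {p : ℕ} (hp : 1 < p)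
    (hexp : ∀ c : C, c ^ p = 1) (t : Finset C) (ht : Subgroup.closure (t : Set C) = ⊤) :
    Nat.card C ≤ p ^ t.card := by
  classical
  have hp0 : 0 < p := by omega
  have hmod : ∀ (c : C) (n : ℕ), c ^ n = c ^ (n % p) := by
    intro c n
    conv_lhs => rw [← Nat.div_add_mod n p]
    rw [pow_add, pow_mul, hexp, one_pow, one_mul]
  set f : ({x // x ∈ t} → Fin p) → C := fun e => ∏ x : {x // x ∈ t}, (x : C) ^ (e x : ℕ) with hf
  have hone : (1 : C) ∈ Set.range f := ⟨fun _ => ⟨0, hp0⟩, by simp [hf]⟩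
  have hmul : ∀ a ∈ Set.range f, ∀ b ∈ Set.range f, a * b ∈ Set.range f := by
    rintro - ⟨e₁, rfl⟩ - ⟨e₂, rfl⟩
    refine ⟨fun x => ⟨((e₁ x : ℕ) + (e₂ x : ℕ)) % p, Nat.mod_lt _ hp0⟩, ?_⟩
    rw [hf]
    simp only
    rw [← Finset.prod_mul_distrib]
    exact Finset.prod_congr rfl fun x _ => by rw [← pow_add]; exact (hmod _ _).symm
  have hpow : ∀ a ∈ Set.range f, ∀ k : ℕ, a ^ k ∈ Set.range f := by
    intro a ha k
    induction k with
    | zero => simpa using hone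
    | succ k ih => rw [pow_succ]; exact hmul _ ih _ ha
  have hsub : (t : Set C) ⊆ Set.range f := by
    intro x hx
    refine ⟨fun x' => if x' = ⟨x, hx⟩ then ⟨1, hp⟩ else ⟨0, hp0⟩, ?_⟩
    rw [hf]
    simp only
    rw [Finset.prod_eq_single (⟨x, hx⟩ : {x // x ∈ t})]
    · simp
    · intro b _ hb; simp [hb]
    · simp
  have hsurj : Function.Surjective f := by
    intro c
    have hc : c ∈ Subgroup.closure (t : Set C) := by rw [ht]; trivial
    refine Subgroup.closure_induction ?_ hone ?_ ?_ hc
    · exact fun x hx => hsub hx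
    · exact fun a b _ _ ha hb => hmul _ ha _ hb
    · intro a _ ha
      have : a⁻¹ = a ^ (p - 1) := by
        apply inv_eq_of_mul_eq_one_right
        rw [← pow_succ']
        rw [show p - 1 + 1 = p by omega]
        exact hexp a
      rw [this]
      exact hpow _ ha _
  calc Nat.card C ≤ Nat.card ({x // x ∈ t} → Fin p) := Nat.card_le_card_of_surjective f hsurj
    _ = p ^ t.card := by
        simp [Nat.card_eq_fintype_card, Fintype.card_fun]

section WreathBound

open Subgroup SemidirectProduct Pointwise

set_option maxHeartbeats 1000000 in
lemma wreath_lower {G : Type} [Group G] [Finite G] [Nontrivial G]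
    {B : Type} [CommGroup B] [Finite B]
    {p m : ℕ} (hp : 1 < p) (hexp : ∀ b : B, b ^ p = 1) (hcard : Nat.card B = p ^ m)
    (t : Finset (RegularWreath B G))
    (ht : Subgroup.closure (t : Set (RegularWreath B G)) = ⊤) :
    m + 1 ≤ t.card := by
  classical
  haveI := Fintype.ofFinite G
  set Φ : FreeGroup {x // x ∈ t} →* RegularWreath B G := FreeGroup.lift Subtype.val with hΦdef
  have hΦ : Function.Surjective Φ := by
    rw [← MonoidHom.range_eq_top, hΦdef, FreeGroup.range_lift_eq_closure, Subtype.range_coe]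
    exact ht
  set ρ : RegularWreath B G →* G := SemidirectProduct.rightHom with hρdef
  set ψ : FreeGroup {x // x ∈ t} →* G := ρ.comp Φ with hψdef
  have hψ : Function.Surjective ψ := rightHom_surjective.comp hΦ
  have hex : ∃ a : {x // x ∈ t}, ψ (FreeGroup.of a) ≠ 1 := by
    by_contra h
    push_neg at h
    obtain ⟨g₀, hg₀⟩ := exists_ne (1 : G)
    have hsub : (t : Set (RegularWreath B G)) ⊆ (ρ.ker : Set (RegularWreath B G)) := by
      intro x hx
      have := h ⟨x, hx⟩
      rw [hψdef, MonoidHom.comp_apply, hΦdef, FreeGroup.lift_apply_of] at this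
      exact this
    have : (⊤ : Subgroup (RegularWreath B G)) ≤ ρ.ker := by
      rw [← ht]; exact Subgroup.closure_le ρ.ker |>.mpr hsub
    have h1 : ρ (SemidirectProduct.inr g₀) = 1 := this (Subgroup.mem_top _)
    rw [hρdef, rightHom_inr] at h1
    exact hg₀ h1
  obtain ⟨a₀, ha₀⟩ := hex
  set σ : G → FreeGroup {x // x ∈ t} := fun g =>
    if g = 1 then 1 else if g = ψ (FreeGroup.of a₀) then FreeGroup.of a₀
      else Function.surjInv hψ g with hσdef
  have hσ : ∀ g, ψ (σ g) = g := by
    intro g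
    by_cases h1 : g = 1
    · simp [hσdef, h1]
    · by_cases h2 : g = ψ (FreeGroup.of a₀)
      · simp [hσdef, h1, h2, ha₀]
      · simp [hσdef, h1, h2, Function.surjInv_eq hψ]
  have hσ1 : σ 1 = 1 := by simp [hσdef]
  have hσa : σ (ψ (FreeGroup.of a₀)) = FreeGroup.of a₀ := by
    rw [hσdef]; simp [ha₀]
  set R : Set (FreeGroup {x // x ∈ t}) := Set.range σ with hRdef
  have h1R : (1 : FreeGroup {x // x ∈ t}) ∈ R := ⟨1, hσ1⟩
  have hmemker : ∀ g : FreeGroup {x // x ∈ t}, g * (σ (ψ g))⁻¹ ∈ ψ.ker := by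
    intro g
    rw [MonoidHom.mem_ker, map_mul, map_inv, hσ, mul_inv_cancel]
  have hR : Subgroup.IsComplement ((ψ.ker : Subgroup _) : Set (FreeGroup {x // x ∈ t})) R := by
    rw [Subgroup.isComplement_iff_existsUnique_mul_inv_mem]
    intro g
    refine ⟨⟨σ (ψ g), ⟨ψ g, rfl⟩⟩, ?_, ?_⟩
    · exact hmemker g
    · rintro ⟨-, b, rfl⟩ hy
      have hyk : ψ (g * (σ b)⁻¹) = 1 := hy
      rw [map_mul, map_inv, hσ] at hyk
      have hb : b = ψ g := by
        have := mul_inv_eq_one.mp hyk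
        exact this.symm
      exact Subtype.ext (by rw [hb])
  have htoF : ∀ g, ((hR.toRightFun g : FreeGroup {x // x ∈ t})) = σ (ψ g) := by
    intro g
    have h1 := hR.mul_inv_toRightFun_mem g
    have huniq := (Subgroup.isComplement_iff_existsUnique_mul_inv_mem.mp hR g)
    have h2 : (⟨σ (ψ g), ⟨ψ g, rfl⟩⟩ : R) = hR.toRightFun g :=
      huniq.unique (hmemker g) h1
    exact (congrArg Subtype.val h2).symm
  set S : Set (FreeGroup {x // x ∈ t}) := Set.range FreeGroup.of with hSdef
  have hSgen : Subgroup.closure S = ⊤ := FreeGroup.closure_range_of _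
  set U : Set (FreeGroup {x // x ∈ t}) :=
    (R * S).image fun g => g * ((hR.toRightFun g : FreeGroup {x // x ∈ t}))⁻¹ with hUdef
  have hUker : Subgroup.closure U = ψ.ker := Subgroup.closure_mul_image_eq hR h1R hSgen
  have h1U : (1 : FreeGroup {x // x ∈ t}) ∈ U := by
    refine ⟨FreeGroup.of a₀, ?_, ?_⟩
    · have := Set.mul_mem_mul h1R (Set.mem_range_self (f := (FreeGroup.of : {x // x ∈ t} → _)) a₀)
      rwa [one_mul] at this
    · show FreeGroup.of a₀ * ((hR.toRightFun (FreeGroup.of a₀) : FreeGroup {x // x ∈ t}))⁻¹ = 1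
      rw [htoF, hσa, mul_inv_cancel]
  set L : RegularWreath B G → (G → B) := SemidirectProduct.left with hLdef
  set X : Set (G → B) := (fun w => L (Φ w)) '' U with hXdef
  have hXker : ∀ u ∈ U, Φ u ∈ ρ.ker := by
    intro u hu
    have h1 : u ∈ ψ.ker := hUker ▸ Subgroup.subset_closure hu
    rw [MonoidHom.mem_ker] at h1 ⊢
    exact h1
  have hinlX : SemidirectProduct.inl '' X = Φ '' U := by
    rw [hXdef, ← Set.image_comp]
    apply Set.image_congr
    intro u hu
    have hker := hXker u hu
    have hr : (Φ u).right = 1 := hker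
    show SemidirectProduct.inl ((Φ u).left) = Φ u
    conv_rhs => rw [← SemidirectProduct.inl_left_mul_inr_right (Φ u)]
    rw [hr, map_one, mul_one]
  have hclX : Subgroup.closure X = ⊤ := by
    apply Subgroup.map_injective
      (SemidirectProduct.inl_injective (φ := wreathAut B (rightRegularPerm G)))
    rw [MonoidHom.map_closure, hinlX, ← MonoidHom.map_closure, hUker]
    have h1 : ψ.ker = Subgroup.comap Φ ρ.ker := by
      rw [MonoidHom.comap_ker]
    rw [h1, Subgroup.map_comap_eq_self_of_surjective hΦ,
      ← SemidirectProduct.range_inl_eq_ker_rightHom, MonoidHom.range_eq_map]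
  have hRSfin : (R * S).Finite :=
    Set.Finite.mul (Set.finite_range σ) (Set.finite_range _)
  have hUfin : U.Finite := Set.Finite.image _ hRSfin
  have hXfin : X.Finite := Set.Finite.image _ hUfin
  set tX := hXfin.toFinset with htXdef
  have htXcl : Subgroup.closure (tX : Set (G → B)) = ⊤ := by
    rw [htXdef, Set.Finite.coe_toFinset]; exact hclX
  have h1tX : (1 : G → B) ∈ tX := by
    rw [htXdef, Set.Finite.mem_toFinset]
    refine ⟨1, h1U, ?_⟩
    show L (Φ 1) = 1
    rw [map_one]
    rfl
  set tE := tX.erase 1 with htEdef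
  have herase : Subgroup.closure ((tE : Finset (G → B)) : Set (G → B)) = ⊤ := by
    rw [htEdef, eq_top_iff, ← htXcl, Subgroup.closure_le]
    intro x hx
    by_cases h1 : x = 1
    · rw [SetLike.mem_coe, h1]; exact Subgroup.one_mem _
    · exact Subgroup.subset_closure (by
        rw [Finset.coe_erase]; exact ⟨hx, h1⟩)
  have hexpGB : ∀ f : G → B, f ^ p = 1 := fun f => funext fun g => hexp (f g)
  have hcardGB : Nat.card (G → B) = p ^ (m * Nat.card G) := by
    rw [Nat.card_pi]
    simp only [hcard]
    rw [Finset.prod_const, ← pow_mul, Finset.card_univ, Nat.card_eq_fintype_card]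
  have hb := card_le_pow_of_closure hp hexpGB tE herase
  rw [hcardGB] at hb
  have hm : m * Nat.card G ≤ tE.card := by
    exact (Nat.pow_le_pow_iff_right (by omega)).mp hb
  have hcard1 : tE.card + 1 = tX.card := by
    have : 0 < tX.card := Finset.card_pos.mpr ⟨1, h1tX⟩
    rw [htEdef, Finset.card_erase_of_mem h1tX]
    omega
  have htXcard : tX.card ≤ Nat.card G * t.card := by
    have h1 : tX.card = X.ncard := by
      rw [htXdef, Set.ncard_eq_toFinset_card X hXfin]
    have h2 : X.ncard ≤ U.ncard := by
      rw [hXdef]; exact Set.ncard_image_le hUfin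
    have h3 : U.ncard ≤ (R * S).ncard := by
      rw [hUdef]; exact Set.ncard_image_le hRSfin
    have h4 : (R * S).ncard ≤ R.ncard * S.ncard := by
      rw [← Nat.card_coe_set_eq, ← Nat.card_coe_set_eq, ← Nat.card_coe_set_eq]
      exact Set.natCard_mul_le
    have h5 : R.ncard ≤ Nat.card G := by
      rw [hRdef, ← Set.image_univ]
      calc (σ '' Set.univ).ncard ≤ (Set.univ : Set G).ncard := Set.ncard_image_le Set.finite_univ
        _ = Nat.card G := Set.ncard_univ G
    have h6 : S.ncard ≤ t.card := by
      rw [hSdef, ← Set.image_univ]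
      calc (FreeGroup.of '' Set.univ).ncard
          ≤ (Set.univ : Set {x // x ∈ t}).ncard := Set.ncard_image_le Set.finite_univ
        _ = Nat.card {x // x ∈ t} := Set.ncard_univ _
        _ = t.card := by rw [Nat.card_eq_fintype_card, Fintype.card_coe]
    calc tX.card = X.ncard := h1
      _ ≤ U.ncard := h2
      _ ≤ (R * S).ncard := h3
      _ ≤ R.ncard * S.ncard := h4
      _ ≤ Nat.card G * t.card := Nat.mul_le_mul h5 h6
  by_contra hcon
  push_neg at hcon
  have htm : t.card ≤ m := by omega
  have hfin : m * Nat.card G + 1 ≤ m * Nat.card G :=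
    calc m * Nat.card G + 1 ≤ tX.card := by omega
      _ ≤ Nat.card G * t.card := htXcard
      _ ≤ Nat.card G * m := Nat.mul_le_mul_left _ htm
      _ = m * Nat.card G := Nat.mul_comm _ _
  omega

end WreathBound


section StructurePart

open Subgroup

set_option maxHeartbeats 1000000 in
lemma exists_elementary_quotient (A : Type) [CommGroup A] [Finite A] [Nontrivial A] :
    ∃ (p m : ℕ) (B : Type) (_ : CommGroup B) (_ : Finite B) (π : A →* B),
      1 < p ∧ Function.Surjective π ∧ (∀ b : B, b ^ p = 1) ∧
      Nat.card B = p ^ m ∧ dGen A ≤ m := by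
  classical
  obtain ⟨ι, fι, q, hq, n, ⟨eAdd⟩⟩ := AddCommGroup.equiv_directSum_zmod_of_finite (Additive A)
  haveI : ∀ i, NeZero (q i ^ n i) := fun i => ⟨pow_ne_zero _ (hq i).ne_zero⟩
  set e : A ≃* ∀ i, Multiplicative (ZMod (q i ^ n i)) :=
    MulEquiv.toAdditive.symm <| eAdd.trans <| (DirectSum.addEquivProd _).trans <|
      MulEquiv.toAdditiveRight <| MulEquiv.piMultiplicative _ with hedef
  have hsing : ∀ i, n i = 0 → ∀ x y : Multiplicative (ZMod (q i ^ n i)), x = y := by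
    intro i hi x y
    haveI : Subsingleton (Multiplicative (ZMod (q i ^ n i))) := by
      have h1 : q i ^ n i = 1 := by rw [hi, pow_zero]
      rw [h1]
      infer_instance
    exact Subsingleton.elim x y
  have hJ : ∃ i, 1 ≤ n i := by
    by_contra h
    push_neg at h
    obtain ⟨x, y, hxy⟩ := exists_pair_ne A
    exact hxy (e.injective (funext fun i => hsing i (by have := h i; omega) _ _))
  set fib : ℕ → Finset ι := fun c => Finset.univ.filter fun i => q i = c ∧ 1 ≤ n i with hfib
  have hPne : (Finset.image q (Finset.univ.filter fun i => 1 ≤ n i)).Nonempty := by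
    obtain ⟨i, hi⟩ := hJ
    exact ⟨q i, Finset.mem_image.mpr ⟨i, Finset.mem_filter.mpr ⟨Finset.mem_univ _, hi⟩, rfl⟩⟩
  obtain ⟨p, hpP, hpmax⟩ :=
    Finset.exists_max_image (Finset.image q (Finset.univ.filter fun i => 1 ≤ n i))
      (fun c => (fib c).card) hPne
  obtain ⟨i₀, hi₀mem, hi₀⟩ := Finset.mem_image.mp hpP
  have hi₀n : 1 ≤ n i₀ := (Finset.mem_filter.mp hi₀mem).2
  have hp : 1 < p := hi₀ ▸ (hq i₀).one_lt
  haveI : NeZero p := ⟨by omega⟩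
  set m := (fib p).card with hm
  have hi₀fib : i₀ ∈ fib p := Finset.mem_filter.mpr ⟨Finset.mem_univ _, hi₀, hi₀n⟩
  have hm1 : 1 ≤ m := Finset.card_pos.mpr ⟨i₀, hi₀fib⟩
  have hmax : ∀ i, 1 ≤ n i → (fib (q i)).card ≤ m := fun i hi =>
    hpmax (q i) (Finset.mem_image.mpr ⟨i, Finset.mem_filter.mpr ⟨Finset.mem_univ _, hi⟩, rfl⟩)
  -- the quotient B
  have hfibprop : ∀ j : {j // j ∈ fib p}, q ↑j = p ∧ 1 ≤ n ↑j := fun j =>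
    (Finset.mem_filter.mp j.2).2
  have hdvd : ∀ j : {j // j ∈ fib p}, p ∣ q ↑j ^ n ↑j := fun j => by
    rw [(hfibprop j).1]
    exact dvd_pow_self p (by have := (hfibprop j).2; omega)
  set red : ∀ j : {j // j ∈ fib p},
      Multiplicative (ZMod (q ↑j ^ n ↑j)) →* Multiplicative (ZMod p) := fun j =>
    AddMonoidHom.toMultiplicative ((ZMod.castHom (hdvd j) (ZMod p)).toAddMonoidHom) with hred
  have hredsurj : ∀ j, Function.Surjective (red j) := by
    intro j y
    refine ⟨Multiplicative.ofAdd ((y.toAdd.val : ℕ) : ZMod (q ↑j ^ n ↑j)), ?_⟩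
    rw [hred]
    simp only [AddMonoidHom.toMultiplicative_apply_apply, toAdd_ofAdd,
      RingHom.toAddMonoidHom_eq_coe, AddMonoidHom.coe_coe, map_natCast]
    rw [ZMod.natCast_rightInverse y.toAdd]
    exact ofAdd_toAdd y
  set B := ({j // j ∈ fib p} → Multiplicative (ZMod p)) with hB
  set π₀ : (∀ i, Multiplicative (ZMod (q i ^ n i))) →* B :=
    { toFun := fun x j => red j (x ↑j)
      map_one' := by
        funext j
        show red j 1 = 1
        rw [map_one]
      map_mul' := by
        intro x y
        funext j
        show red j ((x * y) ↑j) = red j (x ↑j) * red j (y ↑j)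
        rw [Pi.mul_apply, map_mul] } with hπ₀
  have hπ₀surj : Function.Surjective π₀ := by
    intro b
    set x0 : ∀ i, Multiplicative (ZMod (q i ^ n i)) := fun i =>
      if h : i ∈ fib p then Function.surjInv (hredsurj ⟨i, h⟩) (b ⟨i, h⟩) else 1 with hx0
    refine ⟨x0, ?_⟩
    funext j
    have h1 : x0 ↑j = Function.surjInv (hredsurj ⟨↑j, j.2⟩) (b ⟨↑j, j.2⟩) := by
      rw [hx0]
      exact dif_pos j.2
    show red j (x0 ↑j) = b j
    rw [h1]
    exact Function.surjInv_eq (hredsurj ⟨↑j, j.2⟩) (b ⟨↑j, j.2⟩)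
  refine ⟨p, m, B, inferInstance, inferInstance, π₀.comp e.toMonoidHom, hp,
    hπ₀surj.comp e.surjective, ?_, ?_, ?_⟩
  · -- exponent p
    intro b
    funext j
    show (b j) ^ p = 1
    apply Multiplicative.toAdd.injective
    rw [toAdd_pow]
    show p • (b j).toAdd = (1 : Multiplicative (ZMod p)).toAdd
    rw [nsmul_eq_mul]
    simp [ZMod.natCast_self]
  · -- cardinality
    rw [hB, Nat.card_pi]
    have hc : Nat.card (Multiplicative (ZMod p)) = p := by
      rw [Nat.card_congr Multiplicative.toAdd, Nat.card_zmod]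
    rw [Finset.prod_congr rfl fun j _ => hc, Finset.prod_const, Finset.card_univ,
      Fintype.card_coe, hm]
  · -- dGen A ≤ m
    have hpow : ∀ (N k : ℕ), (Multiplicative.ofAdd (1 : ZMod N)) ^ k =
        Multiplicative.ofAdd ((k : ℕ) : ZMod N) := by
      intro N k
      rw [← ofAdd_nsmul, nsmul_eq_mul, mul_one]
    have hAle : dGen A ≤ dGen (∀ i, Multiplicative (ZMod (q i ^ n i))) :=
      dGen_le_of_surjective e.symm.toMonoidHom e.symm.surjective
    set ef : ι → ℕ := fun i => ((Fintype.equivFin ι) i : ℕ) with hef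
    have hefinj : ∀ {i i' : ι}, ef i = ef i' → i = i' := by
      intro i i' h
      exact (Fintype.equivFin ι).injective (Fin.ext h)
    set ν : ι → ℕ := fun i => ((fib (q i)).filter fun i' => ef i' < ef i).card with hν
    have hν1 : ∀ i, 1 ≤ n i → ν i < m := by
      intro i hi
      have hifib : i ∈ fib (q i) := Finset.mem_filter.mpr ⟨Finset.mem_univ _, rfl, hi⟩
      have hsub : ((fib (q i)).filter fun i' => ef i' < ef i) ⊆ (fib (q i)).erase i := by
        intro i' h'
        obtain ⟨h1, h2⟩ := Finset.mem_filter.mp h'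
        refine Finset.mem_erase.mpr ⟨fun h => ?_, h1⟩
        subst h
        exact lt_irrefl _ h2
      have h3 := Finset.card_le_card hsub
      rw [Finset.card_erase_of_mem hifib] at h3
      have h4 := hmax i hi
      have h5 : 0 < (fib (q i)).card := Finset.card_pos.mpr ⟨i, hifib⟩
      have h6 : ν i = ((fib (q i)).filter fun i' => ef i' < ef i).card := by rw [hν]
      omega
    have hν2 : ∀ i i', 1 ≤ n i → 1 ≤ n i' → q i = q i' → ν i = ν i' → i = i' := by
      intro i i' hi hi' hqq hνeq
      by_contra hne
      have hkey : ∀ a b : ι, 1 ≤ n a → 1 ≤ n b → q a = q b → ef a < ef b → ν a < ν b := by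
        intro a b ha hb hab hefab
        have hafib : a ∈ fib (q b) := Finset.mem_filter.mpr ⟨Finset.mem_univ _, hab, ha⟩
        have hsub : ((fib (q a)).filter fun z => ef z < ef a) ⊆
            ((fib (q b)).filter fun z => ef z < ef b) := by
          rw [← hab]
          intro z hz
          obtain ⟨h1, h2⟩ := Finset.mem_filter.mp hz
          exact Finset.mem_filter.mpr ⟨h1, lt_trans h2 hefab⟩
        have hmem : a ∈ (fib (q b)).filter fun z => ef z < ef b :=
          Finset.mem_filter.mpr ⟨hafib, hefab⟩
        have hnmem : a ∉ (fib (q a)).filter fun z => ef z < ef a := by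
          intro h
          exact lt_irrefl _ (Finset.mem_filter.mp h).2
        have := Finset.card_lt_card ((Finset.ssubset_iff_of_subset hsub).mpr
          ⟨a, hmem, hnmem⟩)
        have hva : ν a = ((fib (q a)).filter fun z => ef z < ef a).card := by rw [hν]
        have hvb : ν b = ((fib (q b)).filter fun z => ef z < ef b).card := by rw [hν]
        omega
      rcases lt_trichotomy (ef i) (ef i') with h | h | h
      · have := hkey i i' hi hi' hqq h
        omega
      · exact hne (hefinj h)
      · have := hkey i' i hi' hi hqq.symm h
        omega
    set gfun : ℕ → (∀ i, Multiplicative (ZMod (q i ^ n i))) := fun k i =>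
      if ν i = k ∧ 1 ≤ n i then Multiplicative.ofAdd (1 : ZMod (q i ^ n i)) else 1 with hg
    set gens : Finset (∀ i, Multiplicative (ZMod (q i ^ n i))) :=
      (Finset.range m).image gfun with hgens
    have hgenscard : gens.card ≤ m := by
      rw [hgens]
      exact le_trans Finset.card_image_le (by rw [Finset.card_range])
    have hgen : Subgroup.closure (gens : Set (∀ i, Multiplicative (ZMod (q i ^ n i)))) = ⊤ := by
      rw [eq_top_iff]
      rintro x -
      have hx : ∏ i, Pi.mulSingle i (x i) = x := Finset.univ_prod_mulSingle x
      rw [← hx]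
      apply Subgroup.prod_mem
      rintro i -
      by_cases hni : 1 ≤ n i
      · have hdelta : Pi.mulSingle i (Multiplicative.ofAdd (1 : ZMod (q i ^ n i)))
            ∈ Subgroup.closure (gens : Set (∀ i, Multiplicative (ZMod (q i ^ n i)))) := by
          set c := ∏ i' ∈ Finset.univ.filter
              (fun i' => ν i' = ν i ∧ 1 ≤ n i' ∧ i' ≠ i), q i' ^ n i' with hc
          have hcop : Nat.Coprime c (q i ^ n i) := by
            apply Nat.Coprime.pow_right
            rw [hc]
            apply Nat.Coprime.prod_left
            intro i' hi'
            obtain ⟨hν', hn', hne'⟩ := (Finset.mem_filter.mp hi').2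
            apply Nat.Coprime.pow_left
            refine (Nat.coprime_primes (hq i') (hq i)).mpr ?_
            intro hqq
            exact hne' (hν2 i' i hn' hni hqq hν')
          have hone_lt : 1 < q i ^ n i := Nat.one_lt_pow (by omega) (hq i).one_lt
          obtain ⟨d, -, hd⟩ := Nat.exists_mul_mod_eq_one_of_coprime hcop hone_lt
          have hgk : gfun (ν i) ∈ (gens : Set (∀ i, Multiplicative (ZMod (q i ^ n i)))) := by
            rw [hgens]
            exact Finset.mem_coe.mpr (Finset.mem_image.mpr
              ⟨ν i, Finset.mem_range.mpr (hν1 i hni), rfl⟩)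
          have key : (gfun (ν i)) ^ (c * d) =
              Pi.mulSingle i (Multiplicative.ofAdd (1 : ZMod (q i ^ n i))) := by
            funext i'
            rw [Pi.pow_apply]
            by_cases h2 : i' = i
            · subst h2
              simp only [hg]
              rw [if_pos ⟨trivial, hni⟩, Pi.mulSingle_eq_same, hpow]
              rw [← ZMod.natCast_mod, hd, Nat.cast_one]
            · have hnei : i' ≠ i := h2
              rw [Pi.mulSingle_eq_of_ne hnei]
              simp only [hg]
              by_cases h1 : ν i' = ν i ∧ 1 ≤ n i'
              · rw [if_pos h1, hpow]
                have hdvd' : q i' ^ n i' ∣ c := by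
                  rw [hc]
                  exact Finset.dvd_prod_of_mem _ (Finset.mem_filter.mpr
                    ⟨Finset.mem_univ _, h1.1, h1.2, hnei⟩)
                have h0 : ((c * d : ℕ) : ZMod (q i' ^ n i')) = 0 :=
                  (ZMod.natCast_eq_zero_iff _ _).mpr (Dvd.dvd.mul_right hdvd' d)
                rw [h0]
                rfl
              · rw [if_neg h1, one_pow]
          exact key ▸ Subgroup.pow_mem _ (Subgroup.subset_closure hgk) (c * d)
        have hxi : x i = (Multiplicative.ofAdd (1 : ZMod (q i ^ n i))) ^
            (((x i).toAdd).val) := by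
          rw [hpow, ZMod.natCast_rightInverse ((x i).toAdd)]
          exact (ofAdd_toAdd (x i)).symm
        rw [hxi, Pi.mulSingle_pow]
        exact Subgroup.pow_mem _ hdelta _
      · have hx1 : x i = 1 := hsing i (by omega) _ _
        rw [hx1, Pi.mulSingle_one]
        exact Subgroup.one_mem _
    calc dGen A ≤ dGen (∀ i, Multiplicative (ZMod (q i ^ n i))) := hAle
      _ ≤ gens.card := dGen_le_card hgen
      _ ≤ m := hgenscard

end StructurePart

/-- Let `G` be a finite almost simple group and let `A` be a nontrivial finite abelian
group. Then for the wreath product `A ≀ G` constructed via the regular action of `G`,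
`d(A ≀ G) ≥ d(A) + 1`. -/
theorem rank_abelian_regular_wreath_ge
    (G : Type) [Group G] [Finite G] (hG : IsAlmostSimple G)
    (A : Type) [CommGroup A] [Finite A] (hA : Nontrivial A) :
    dGen A + 1 ≤ dGen (RegularWreath A G) := by
  classical
  obtain ⟨S, hSnormal, hSsimple, -, -⟩ := hG
  haveI : IsSimpleGroup ↥S := hSsimple
  haveI hGnt : Nontrivial G := by
    obtain ⟨s, hs⟩ := exists_ne (1 : ↥S)
    refine ⟨(s : G), 1, fun h => hs ?_⟩
    ext
    simpa using h
  obtain ⟨p, m, B, hBc, hBf, π, hp, hπ, hexp, hcard, hdA⟩ := exists_elementary_quotient A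
  set Ψ : RegularWreath A G →* RegularWreath B G :=
    SemidirectProduct.map (π.compLeft G) (MonoidHom.id G)
      (fun g => DFunLike.ext _ _ fun f => funext fun y => rfl) with hΨ
  have hΨs : Function.Surjective Ψ := by
    rintro ⟨f, g⟩
    refine ⟨⟨fun y => Function.surjInv hπ (f y), g⟩, ?_⟩
    have h1 : (Ψ (⟨fun y => Function.surjInv hπ (f y), g⟩ : RegularWreath A G)).left = f := by
      funext y
      show π (Function.surjInv hπ (f y)) = f y
      exact Function.surjInv_eq hπ (f y)
    have h2 : (Ψ (⟨fun y => Function.surjInv hπ (f y), g⟩ : RegularWreath A G)).right = g := rfl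
    exact SemidirectProduct.ext h1 h2
  obtain ⟨s, hscard, hsgen⟩ := exists_dGen_finset (RegularWreath A G)
  have htgen : Subgroup.closure ((s.image Ψ : Finset (RegularWreath B G)) :
      Set (RegularWreath B G)) = ⊤ := by
    rw [Finset.coe_image, ← MonoidHom.map_closure, hsgen, Subgroup.map_top_of_surjective _ hΨs]
  have hkey := wreath_lower hp hexp hcard (s.image Ψ) htgen
  have h2 : m + 1 ≤ s.card := le_trans hkey Finset.card_image_le
  omega
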